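/- Let (V, j) be as above with dim_ℝ V = 2m, and let r be an endomorphism of V with r² = id, rj = −jr, and r split. Set R = diag(r, −r*) on E = V ⊕ V*. Then R anti-commutes with J₊ = diag(j, j*), R is skew-symmetric for b, R² = id, and the symmetric form β_R(x, y) = b(R J₊ x, y) is split, i.e., has signature (2m, 2m). -/

import Mathlib

/-- A real bilinear form `β` on `E` has signature `(p, q)`. -/
def HasSignature {E : Type*} [AddCommGroup E] [Module ℝ E]
    (β : E → E → ℝ) (p q : ℕ) : Prop :=
  ((∃ P : Submodule ℝ E, Module.finrank ℝ P = p ∧ ∀ x ∈ P, x ≠ 0 → 0 < β x x) ∧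
    ∀ P : Submodule ℝ E, (∀ x ∈ P, x ≠ 0 → 0 < β x x) → Module.finrank ℝ P ≤ p) ∧
  ((∃ N : Submodule ℝ E, Module.finrank ℝ N = q ∧ ∀ x ∈ N, x ≠ 0 → β x x < 0) ∧
    ∀ N : Submodule ℝ E, (∀ x ∈ N, x ≠ 0 → β x x < 0) → Module.finrank ℝ N ≤ q)

lemma aux_sum_le {E : Type*} [AddCommGroup E] [Module ℝ E] [FiniteDimensional ℝ E]
    (β : E → E → ℝ) (P N : Submodule ℝ E)
    (hP : ∀ x ∈ P, x ≠ 0 → 0 < β x x) (hN : ∀ x ∈ N, x ≠ 0 → β x x < 0) :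
    Module.finrank ℝ P + Module.finrank ℝ N ≤ Module.finrank ℝ E := by
  have hdisj : P ⊓ N = ⊥ := by
    rw [Submodule.eq_bot_iff]
    intro x hx
    by_contra hx0
    exact absurd (hP x hx.1 hx0) (not_lt.mpr (le_of_lt (hN x hx.2 hx0)))
  have := Submodule.finrank_sup_add_finrank_inf_eq P N
  rw [hdisj] at this
  simp only [finrank_bot, add_zero] at this
  rw [← this]
  exact Submodule.finrank_le _

theorem stmt6 (V : Type*) [AddCommGroup V] [Module ℝ V] [FiniteDimensional ℝ V]
    (m : ℕ) (hdim : Module.finrank ℝ V = 2 * m)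
    (j : V →ₗ[ℝ] V) (hj : ∀ v, j (j v) = -v)
    (r : Module.End ℝ V) (hr2 : ∀ v, r (r v) = v)
    (hrj : ∀ v, r (j v) = - j (r v))
    (hrsplit : Module.finrank ℝ (r.eigenspace 1) = Module.finrank ℝ (r.eigenspace (-1)))
    (b : (V × Module.Dual ℝ V) → (V × Module.Dual ℝ V) → ℝ)
    (hb : ∀ x y, b x y = y.2 x.1 + x.2 y.1)
    (J : (V × Module.Dual ℝ V) → (V × Module.Dual ℝ V))
    (hJ : ∀ x, J x = (j x.1, j.dualMap x.2))
    (R : (V × Module.Dual ℝ V) → (V × Module.Dual ℝ V))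
    (hR : ∀ x, R x = (r x.1, -(r : V →ₗ[ℝ] V).dualMap x.2))
    (β : (V × Module.Dual ℝ V) → (V × Module.Dual ℝ V) → ℝ)
    (hβ : ∀ x y, β x y = b (R (J x)) y) :
    (∀ x, R (J x) = - J (R x)) ∧
    (∀ x y, b (R x) y = - b x (R y)) ∧
    (∀ x, R (R x) = x) ∧
    (∀ x y, β x y = β y x) ∧
    HasSignature β (2 * m) (2 * m) := by
  have hjr : ∀ v, j (r v) = - r (j v) := fun v => by rw [hrj]; simp
  set s : V →ₗ[ℝ] V := r ∘ₗ j with hs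
  have hss : ∀ v, s v = r (j v) := fun v => rfl
  have hs2 : ∀ v, s (s v) = v := by
    intro v
    rw [hss, hss, hrj, hr2, hj, neg_neg]
  -- pointwise formula for β
  have hβ' : ∀ x y : V × Module.Dual ℝ V, β x y = y.2 (s x.1) + x.2 (s y.1) := by
    intro x y
    rw [hβ, hJ, hR, hb]
    simp only [LinearMap.dualMap_apply, LinearMap.neg_apply]
    rw [hss, hss]
    have : x.2 (j (r y.1)) = - x.2 (r (j y.1)) := by rw [hjr]; simp
    simp only [this]
    ring
  refine ⟨?_, ?_, ?_, ?_, ?_⟩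
  · -- anticommute
    intro x
    rw [hJ, hR, hR, hJ]
    refine Prod.ext ?_ ?_
    · simpa using hrj x.1
    · simp only [Prod.snd_neg, Prod.fst_neg]
      ext v
      simp only [LinearMap.dualMap_apply, LinearMap.neg_apply]
      rw [hjr]
      simp
  · -- skew
    intro x y
    rw [hR, hR, hb, hb]
    simp only [LinearMap.dualMap_apply, LinearMap.neg_apply]
    ring
  · -- involution
    intro x
    rw [hR, hR]
    refine Prod.ext (by simpa using hr2 x.1) ?_
    ext v
    simp [hr2 v]
  · -- symmetric
    intro x y
    rw [hβ', hβ']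
    ring
  · -- signature
    have hsinj : Function.Injective s := by
      intro u v h
      have := congrArg s h
      rwa [hs2, hs2] at this
    -- positive definite form on V
    classical
    let c := Module.finBasis ℝ V
    let G : V →ₗ[ℝ] Module.Dual ℝ V :=
      ∑ i, (c.coord i).smulRight (c.coord i)
    have hG : ∀ v w, G v w = ∑ i, c.repr v i * c.repr w i := by
      intro v w
      simp [G, LinearMap.sum_apply, Module.Basis.coord_apply, smul_eq_mul, mul_comm]
    have hGpos : ∀ v, v ≠ 0 → 0 < G v v := by
      intro v hv
      rw [hG]
      apply Finset.sum_pos'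
      · intro i _; exact mul_self_nonneg _
      · have : c.repr v ≠ 0 := fun h => hv (by simpa using congrArg c.repr.symm h)
        obtain ⟨i, hi⟩ : ∃ i, c.repr v i ≠ 0 := by
          by_contra h
          push_neg at h
          exact this (by ext i; simpa using h i)
        exact ⟨i, Finset.mem_univ i, mul_self_pos.mpr hi⟩
    have hEfin : Module.finrank ℝ (V × Module.Dual ℝ V) = 2 * m + 2 * m := by
      rw [Module.finrank_prod, Subspace.dual_finrank_eq, hdim]
    -- positive and negative subspaces
    have key : ∀ ε : ℝ, ε = 1 ∨ ε = -1 →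
        ∃ P : Submodule ℝ (V × Module.Dual ℝ V), Module.finrank ℝ P = 2 * m ∧
          ∀ x ∈ P, x ≠ 0 → 0 < ε * β x x := by
      intro ε hε
      let L : V →ₗ[ℝ] V × Module.Dual ℝ V := LinearMap.prod LinearMap.id (ε • (G ∘ₗ s))
      have hLinj : Function.Injective L := by
        intro u v h
        simpa [L] using congrArg Prod.fst h
      refine ⟨LinearMap.range L, ?_, ?_⟩
      · rw [LinearMap.finrank_range_of_inj hLinj, hdim]
      · rintro x ⟨v, rfl⟩ hx0
        have hv : v ≠ 0 := by rintro rfl; exact hx0 (by simp [L])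
        have hsv : s v ≠ 0 := fun h => hv (by rw [← hs2 v, h, map_zero])
        have hβx : β (L v) (L v) = ε * (2 * G (s v) (s v)) := by
          rw [hβ']
          simp only [L, LinearMap.prod_apply, LinearMap.coe_comp, Function.comp_apply,
            LinearMap.smul_apply, Function.prod, LinearMap.id_apply, smul_eq_mul]
          ring
        rw [hβx]
        have hε2 : ε * ε = 1 := by rcases hε with h | h <;> rw [h] <;> norm_num
        calc (0:ℝ) < ε * ε * (2 * G (s v) (s v)) := by
              rw [hε2]; have := hGpos _ hsv; linarith
          _ = ε * (ε * (2 * G (s v) (s v))) := by ring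
      done
    obtain ⟨P, hPrank, hPpos⟩ := key 1 (Or.inl rfl)
    obtain ⟨N, hNrank, hNneg'⟩ := key (-1) (Or.inr rfl)
    have hPpos' : ∀ x ∈ P, x ≠ 0 → 0 < β x x := by
      intro x hx hx0; have := hPpos x hx hx0; linarith
    have hNneg : ∀ x ∈ N, x ≠ 0 → β x x < 0 := by
      intro x hx hx0; have := hNneg' x hx hx0; linarith
    refine ⟨⟨⟨P, hPrank, hPpos'⟩, ?_⟩, ⟨N, hNrank, hNneg⟩, ?_⟩
    · intro P' hP'
      have := aux_sum_le β P' N hP' hNneg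
      rw [hNrank, hEfin] at this
      omega
    · intro N' hN'
      have := aux_sum_le β P N' hPpos' hN'
      rw [hPrank, hEfin] at this
      omega
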